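/- Assume the approximate functional equation E*(g,s) + 1/s + 1/(n-s) ≥ (1/2) ∑_{0≠b∈ℤ} f(s, |b| λ₁(g)) for real 1 < s < n, where f(s,a) = ∫_1^∞ t^{s/2} e^{-π t a²} dt/t. Then whenever λ₁(g) ≤ 2^{-1/(s-1)}, one has E*(g,s) + 1/s + 1/(n-s) ≥ c · λ₁(g)^{-s} for an explicit constant c = erfc(√π)/(2(s-1)) > 0 depending only on s. -/

import Mathlib

open Real Set
open MeasureTheory Filter

namespace Stmt10Aux

noncomputable def G (s lam : ℝ) (b : ℤ) : ℝ :=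
  ∫ t in Ioi (1:ℝ), t ^ (s/2 - 1) * Real.exp (-(π * t * (((|b| : ℤ) : ℝ) * lam) ^ 2))

lemma integrable_aux {s a : ℝ} (hs : 0 < s) (ha : 0 < a) :
    IntegrableOn (fun t : ℝ => t ^ (s/2-1) * Real.exp (-(π * t * a^2))) (Ioi 1) := by
  have h := integrableOn_rpow_mul_exp_neg_mul_rpow (s := s/2-1) (p := 1) (b := π * a^2)
    (by linarith) one_pos (by positivity)
  have h2 : IntegrableOn (fun t : ℝ => t ^ (s/2-1) * Real.exp (-(π * t * a^2))) (Ioi 0) := by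
    refine h.congr_fun (fun x hx => ?_) measurableSet_Ioi
    simp only [Real.rpow_one]
    congr 1
    ring
  exact h2.mono_set (Ioi_subset_Ioi zero_le_one)

lemma G_nonneg (s lam : ℝ) (b : ℤ) : 0 ≤ G s lam b := by
  refine setIntegral_nonneg measurableSet_Ioi (fun t ht => ?_)
  have ht0 : (0:ℝ) < t := lt_trans zero_lt_one (mem_Ioi.1 ht)
  positivity

lemma G_neg (s lam : ℝ) (b : ℤ) : G s lam (-b) = G s lam b := by
  simp [G, abs_neg]

lemma G_le {s lam : ℝ} (hs : 0 < s) (hlam0 : 0 < lam) (k : ℕ) :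
    G s lam ((k:ℤ)+1) ≤ Real.exp (-(π * lam^2)) ^ k * G s lam 1 := by
  have habs : (((|( (k:ℤ)+1 )| : ℤ) : ℝ)) = (k:ℝ)+1 := by
    rw [abs_of_nonneg (by positivity : (0:ℤ) ≤ (k:ℤ)+1)]
    push_cast
    ring
  have h1 : G s lam ((k:ℤ)+1)
      = ∫ t in Ioi (1:ℝ), t ^ (s/2-1) * Real.exp (-(π * t * (((k:ℝ)+1) * lam)^2)) := by
    unfold G
    rw [habs]
  have habs1 : (((|(1:ℤ)| : ℤ)) : ℝ) = (1:ℝ) := by norm_num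
  have h2 : G s lam 1 = ∫ t in Ioi (1:ℝ), t ^ (s/2-1) * Real.exp (-(π * t * lam^2)) := by
    unfold G
    rw [habs1, one_mul]
  rw [h1, h2, ← Real.exp_nat_mul, ← integral_const_mul]
  refine setIntegral_mono_on (integrable_aux hs (by positivity))
    ((integrable_aux hs hlam0).const_mul _) measurableSet_Ioi (fun t ht => ?_)
  have ht1 : (1:ℝ) ≤ t := le_of_lt (mem_Ioi.1 ht)
  have ht0 : (0:ℝ) < t := lt_of_lt_of_le zero_lt_one ht1
  have hre : rexp ((k:ℝ) * -(π * lam ^ 2)) * (t ^ (s/2-1) * rexp (-(π * t * lam ^ 2)))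
      = t ^ (s/2-1) * rexp (-(π * t * lam ^ 2) + (k:ℝ) * -(π * lam ^ 2)) := by
    rw [Real.exp_add]; ring
  rw [hre]
  refine mul_le_mul_of_nonneg_left (Real.exp_le_exp.2 ?_) (by positivity)
  have hk0 : (0:ℝ) ≤ (k:ℝ) := Nat.cast_nonneg k
  have h2 : (0:ℝ) ≤ t*(((k:ℝ)+1)^2 - 1) - k := by
    nlinarith [mul_nonneg (sub_nonneg.2 ht1) (by positivity : (0:ℝ) ≤ (k:ℝ)^2+2*k),
      sq_nonneg (k:ℝ)]
  have key : (0:ℝ) ≤ π * lam^2 * (t*(((k:ℝ)+1)^2 - 1) - k) :=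
    mul_nonneg (by positivity) h2
  nlinarith [key]

lemma summable_G {s lam : ℝ} (hs : 0 < s) (hlam0 : 0 < lam) :
    Summable (fun b : ℤ => G s lam b) := by
  have hr0 : (0:ℝ) ≤ Real.exp (-(π * lam^2)) := (Real.exp_pos _).le
  have hr1 : Real.exp (-(π * lam^2)) < 1 := by
    rw [Real.exp_lt_one_iff]
    have : 0 < π * lam^2 := by positivity
    linarith
  have hgeo : Summable (fun k : ℕ => Real.exp (-(π * lam^2)) ^ k * G s lam 1) :=
    (summable_geometric_of_lt_one hr0 hr1).mul_right _
  have hnat : Summable (fun k : ℕ => G s lam k) := by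
    rw [← summable_nat_add_iff 1]
    refine Summable.of_nonneg_of_le (fun k => G_nonneg _ _ _) (fun k => ?_) hgeo
    have h := G_le hs hlam0 k
    rw [show ((k:ℤ)+1) = ((k+1 : ℕ) : ℤ) by push_cast; ring] at h
    exact h
  exact Summable.of_nat_of_neg hnat (hnat.congr (fun k => (G_neg s lam k).symm))

lemma two_sum_le_tsum {s lam : ℝ} (hs : 0 < s) (hlam0 : 0 < lam) (K : ℕ) :
    2 * ∑ k ∈ Finset.range K, G s lam ((k:ℤ)+1)
      ≤ ∑' b : {b : ℤ // b ≠ 0}, G s lam (b : ℤ) := by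
  have hsum := summable_G hs hlam0
  have hts : (∑' b : {b : ℤ // b ≠ 0}, G s lam (b : ℤ))
      = ∑' b : ℤ, Set.indicator {b : ℤ | b ≠ 0} (G s lam) b :=
    tsum_subtype {b : ℤ | b ≠ 0} (G s lam)
  rw [hts]
  have hind : Summable (Set.indicator {b : ℤ | b ≠ 0} (G s lam)) :=
    hsum.indicator _
  have hfin : ∑ b ∈ Finset.Icc (-(K:ℤ)) K, Set.indicator {b : ℤ | b ≠ 0} (G s lam) b
      = 2 * ∑ k ∈ Finset.range K, G s lam ((k:ℤ)+1) := by
    induction K with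
    | zero => simp [Set.indicator_of_notMem]
    | succ K ih =>
      have hins : Finset.Icc (-(K+1:ℤ)) (K+1)
          = insert (-(K+1:ℤ)) (insert ((K:ℤ)+1) (Finset.Icc (-(K:ℤ)) K)) := by
        ext x
        simp only [Finset.mem_Icc, Finset.mem_insert]
        omega
      have hc : (-(K+1:ℤ)) = -((K:ℤ)+1) := by push_cast; ring
      have hcast : ((K+1 : ℕ) : ℤ) = (K:ℤ)+1 := by push_cast; ring
      rw [show (-(((K:ℕ)+1 : ℕ)):ℤ) = (-(K+1:ℤ)) by push_cast; ring,
        show (((K:ℕ)+1 : ℕ) : ℤ) = ((K+1:ℤ)) by push_cast; ring]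
      rw [hins, Finset.sum_insert (by simp only [Finset.mem_insert, Finset.mem_Icc]; omega),
        Finset.sum_insert (by simp only [Finset.mem_Icc]; omega), ih,
        Finset.sum_range_succ]
      rw [Set.indicator_of_mem (by simp only [mem_setOf_eq]; omega),
        Set.indicator_of_mem (by simp only [mem_setOf_eq]; omega)]
      rw [hc, G_neg]
      push_cast
      ring
  rw [← hfin]
  exact Summable.sum_le_tsum _ (fun i _ => Set.indicator_nonneg (fun b _ => G_nonneg _ _ _) _) hind


lemma gauss_integrable : Integrable (fun u : ℝ => Real.exp (-u^2)) := by
  simpa using integrable_exp_neg_mul_sq (one_pos)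

lemma tau_tendsto {c₀ : ℝ} (hc₀ : 0 < c₀) :
    Tendsto (fun K : ℕ => ∫ u in Ioi ((1+(K:ℝ)) * c₀), Real.exp (-u^2)) atTop (nhds 0) := by
  have htend0 : Tendsto (fun K : ℕ => 1+(K:ℝ)) atTop atTop :=
    tendsto_atTop_add_const_left _ 1 tendsto_natCast_atTop_atTop
  have htend : Tendsto (fun K : ℕ => (1+(K:ℝ)) * c₀) atTop atTop :=
    htend0.atTop_mul_const hc₀
  have hexpInt : IntegrableOn (fun u : ℝ => Real.exp (-u)) (Ioi (0:ℝ)) := by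
    have := exp_neg_integrableOn_Ioi (0:ℝ) one_pos
    simpa using this
  have h1 : ∀ᶠ K : ℕ in atTop, 0 ≤ ∫ u in Ioi ((1+(K:ℝ)) * c₀), Real.exp (-u^2) :=
    Eventually.of_forall (fun K =>
      setIntegral_nonneg measurableSet_Ioi (fun u _ => (Real.exp_pos _).le))
  have h3 : Tendsto (fun K : ℕ => Real.exp (-((1+(K:ℝ)) * c₀))) atTop (nhds 0) :=
    Real.tendsto_exp_atBot.comp (tendsto_neg_atTop_atBot.comp htend)
  have h2 : ∀ᶠ K : ℕ in atTop, (∫ u in Ioi ((1+(K:ℝ)) * c₀), Real.exp (-u^2))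
      ≤ Real.exp (-((1+(K:ℝ)) * c₀)) := by
    filter_upwards [htend.eventually_ge_atTop 1] with K hK
    calc (∫ u in Ioi ((1+(K:ℝ)) * c₀), Real.exp (-u^2))
        ≤ ∫ u in Ioi ((1+(K:ℝ)) * c₀), Real.exp (-u) := by
          refine setIntegral_mono_on gauss_integrable.integrableOn
            (hexpInt.mono_set (Ioi_subset_Ioi (by linarith))) measurableSet_Ioi
            (fun u hu => Real.exp_le_exp.2 ?_)
          have hu1 : (1:ℝ) ≤ u := le_of_lt (lt_of_le_of_lt hK (mem_Ioi.1 hu))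
          nlinarith
      _ = Real.exp (-((1+(K:ℝ)) * c₀)) := integral_exp_neg_Ioi _
  exact squeeze_zero' h1 h2 h3



lemma key_bound {s lam : ℝ} (erfc : ℝ → ℝ)
    (herfc : ∀ x : ℝ, erfc x = (2 / Real.sqrt π) * ∫ u in Ioi x, Real.exp (-u ^ 2))
    (hs1 : 1 < s) (hlam0 : 0 < lam) (hlam1 : lam < 1) (K : ℕ) :
    (Real.sqrt π / 2 * erfc (Real.sqrt π)
        - ∫ u in Ioi ((1+(K:ℝ)) * (Real.sqrt π * lam)), Real.exp (-u^2))
      * ((Real.sqrt π * lam)⁻¹ * ∫ t in (1:ℝ)..(lam⁻¹^2), t ^ ((s-3)/2))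
    ≤ ∑ k ∈ Finset.range K, G s lam ((k:ℤ)+1) := by
  have hs0 : (0:ℝ) < s := by linarith
  have hsqπ : 0 < Real.sqrt π := Real.sqrt_pos.2 pi_pos
  set B : ℝ := lam⁻¹^2 with hBdef
  have hlaminv : 1 < lam⁻¹ := (one_lt_inv₀ hlam0).2 hlam1
  have hB1 : 1 < B := by nlinarith
  set τ : ℝ := ∫ u in Ioi ((1+(K:ℝ)) * (Real.sqrt π * lam)), Real.exp (-u^2) with hτdef
  set M : ℝ := Real.sqrt π / 2 * erfc (Real.sqrt π) - τ with hMdef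
  have hIπ : (∫ u in Ioi (Real.sqrt π), Real.exp (-u^2))
      = Real.sqrt π / 2 * erfc (Real.sqrt π) := by
    rw [herfc (Real.sqrt π)]
    have : (Real.sqrt π) ≠ 0 := ne_of_gt hsqπ
    field_simp
  have huIcc : uIcc (1:ℝ) B = Icc 1 B := uIcc_of_le hB1.le
  have hrpowOn : ∀ p : ℝ, ContinuousOn (fun t : ℝ => t ^ p) (uIcc 1 B) := by
    intro p
    apply ContinuousOn.rpow_const continuousOn_id
    intro x hx
    rw [huIcc] at hx
    exact Or.inl (ne_of_gt (lt_of_lt_of_le zero_lt_one hx.1))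
  have hconk : ∀ k : ℕ, ContinuousOn
      (fun t : ℝ => t^(s/2-1) * Real.exp (-(π*t*(((k:ℝ)+1)*lam)^2))) (uIcc 1 B) := by
    intro k
    exact (hrpowOn (s/2-1)).mul (Real.continuous_exp.comp (by fun_prop)).continuousOn
  have hIntk : ∀ k : ℕ, IntervalIntegrable
      (fun t : ℝ => t^(s/2-1) * Real.exp (-(π*t*(((k:ℝ)+1)*lam)^2))) volume 1 B :=
    fun k => (hconk k).intervalIntegrable
  have hInt2 : IntervalIntegrable
      (fun t : ℝ => ∑ k ∈ Finset.range K, t^(s/2-1) * Real.exp (-(π*t*(((k:ℝ)+1)*lam)^2)))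
      volume 1 B := by
    apply ContinuousOn.intervalIntegrable
    exact continuousOn_finset_sum _ (fun k _ => hconk k)
  have hInt1 : IntervalIntegrable
      (fun t : ℝ => M * ((Real.sqrt π * lam)⁻¹ * t ^ ((s-3)/2))) volume 1 B := by
    apply ContinuousOn.intervalIntegrable
    exact continuousOn_const.mul (continuousOn_const.mul (hrpowOn ((s-3)/2)))
  have hGb : ∀ k : ℕ, (∫ t in (1:ℝ)..B, t^(s/2-1) * Real.exp (-(π*t*(((k:ℝ)+1)*lam)^2)))
      ≤ G s lam ((k:ℤ)+1) := by
    intro k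
    have habs : (((|( (k:ℤ)+1 )| : ℤ) : ℝ)) = (k:ℝ)+1 := by
      rw [abs_of_nonneg (by positivity : (0:ℤ) ≤ (k:ℤ)+1)]
      push_cast
      ring
    have hG : G s lam ((k:ℤ)+1)
        = ∫ t in Ioi (1:ℝ), t ^ (s/2-1) * Real.exp (-(π * t * (((k:ℝ)+1) * lam)^2)) := by
      unfold G
      rw [habs]
    rw [hG, intervalIntegral.integral_of_le hB1.le]
    refine setIntegral_mono_set (integrable_aux hs0 (by positivity)) ?_
      (HasSubset.Subset.eventuallyLE Ioc_subset_Ioi_self)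
    refine (ae_restrict_iff' measurableSet_Ioi).2 (Eventually.of_forall fun x hx => ?_)
    have hx0 : (0:ℝ) < x := lt_trans zero_lt_one (mem_Ioi.1 hx)
    positivity
  have hpt : ∀ t ∈ Icc (1:ℝ) B, M * ((Real.sqrt π * lam)⁻¹ * t ^ ((s-3)/2))
      ≤ ∑ k ∈ Finset.range K, t^(s/2-1) * Real.exp (-(π*t*(((k:ℝ)+1)*lam)^2)) := by
    intro t ht
    obtain ⟨ht1, htB⟩ := ht
    have ht0 : (0:ℝ) < t := lt_of_lt_of_le zero_lt_one ht1
    set c : ℝ := Real.sqrt (π*t) * lam with hcdef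
    have hsq : 0 < Real.sqrt (π*t) := Real.sqrt_pos.2 (by positivity)
    have hc0 : 0 < c := by positivity
    have hcsq : c^2 = π*t*lam^2 := by
      rw [hcdef, mul_pow, Real.sq_sqrt (by positivity)]
    have hexpk : ∀ k : ℕ, Real.exp (-(π*t*(((k:ℝ)+1)*lam)^2))
        = Real.exp (-(c*(1+(k:ℝ)))^2) := by
      intro k
      congr 1
      have h : (c*(1+(k:ℝ)))^2 = π*t*(((k:ℝ)+1)*lam)^2 := by rw [mul_pow, hcsq]; ring
      rw [h]
    have hanti : AntitoneOn (fun u : ℝ => Real.exp (-(c*u)^2)) (Icc 1 (1+(K:ℝ))) := by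
      intro u hu v hv huv
      apply Real.exp_le_exp.2
      have h0 : (0:ℝ) ≤ v + u := by
        have := hu.1; have := hv.1; linarith
      have h1 := mul_nonneg (mul_nonneg (sq_nonneg c) (sub_nonneg.2 huv)) h0
      nlinarith [h1]
    have hcomp := hanti.integral_le_sum
    have hsubst : (∫ x in (1:ℝ)..(1+(K:ℝ)), Real.exp (-(c*x)^2))
        = c⁻¹ * ∫ u in c..(c*(1+(K:ℝ))), Real.exp (-u^2) := by
      rw [intervalIntegral.integral_comp_mul_left (fun u => Real.exp (-u^2)) (ne_of_gt hc0)]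
      rw [mul_one, smul_eq_mul]
    have hle : c ≤ c*(1+(K:ℝ)) := by nlinarith [(Nat.cast_nonneg K : (0:ℝ) ≤ (K:ℝ)), hc0]
    have hsplit : (∫ u in Ioi c, Real.exp (-u^2))
        = (∫ u in Ioc c (c*(1+(K:ℝ))), Real.exp (-u^2))
          + ∫ u in Ioi (c*(1+(K:ℝ))), Real.exp (-u^2) := by
      rw [← setIntegral_union (Ioc_disjoint_Ioi le_rfl) measurableSet_Ioi
        gauss_integrable.integrableOn gauss_integrable.integrableOn,
        Ioc_union_Ioi_eq_Ioi hle]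
    have hcπ : c ≤ Real.sqrt π := by
      have h2 : π * t ≤ π * lam⁻¹^2 := by nlinarith [pi_pos]
      have h1 : Real.sqrt (π*t) ≤ Real.sqrt π * lam⁻¹ := by
        calc Real.sqrt (π*t) ≤ Real.sqrt (π * lam⁻¹^2) := Real.sqrt_le_sqrt h2
          _ = Real.sqrt π * lam⁻¹ := by
            rw [Real.sqrt_mul pi_pos.le, Real.sqrt_sq (by positivity)]
      calc c = Real.sqrt (π*t) * lam := rfl
        _ ≤ (Real.sqrt π * lam⁻¹) * lam := mul_le_mul_of_nonneg_right h1 hlam0.le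
        _ = Real.sqrt π := by field_simp
    have hmono1 : Real.sqrt π / 2 * erfc (Real.sqrt π) ≤ ∫ u in Ioi c, Real.exp (-u^2) := by
      rw [← hIπ]
      exact setIntegral_mono_set gauss_integrable.integrableOn
        (Eventually.of_forall fun u => (Real.exp_pos _).le)
        (HasSubset.Subset.eventuallyLE (Ioi_subset_Ioi hcπ))
    have hc₀c : Real.sqrt π * lam ≤ c := by
      have h3 : Real.sqrt π ≤ Real.sqrt (π*t) := Real.sqrt_le_sqrt (by nlinarith [pi_pos])
      exact mul_le_mul_of_nonneg_right h3 hlam0.le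
    have hmono2 : (∫ u in Ioi (c*(1+(K:ℝ))), Real.exp (-u^2)) ≤ τ := by
      rw [hτdef]
      refine setIntegral_mono_set gauss_integrable.integrableOn
        (Eventually.of_forall fun u => (Real.exp_pos _).le)
        (HasSubset.Subset.eventuallyLE (Ioi_subset_Ioi ?_))
      have h0 : (0:ℝ) ≤ 1 + (K:ℝ) := by positivity
      calc (1+(K:ℝ)) * (Real.sqrt π * lam) = (Real.sqrt π * lam) * (1+(K:ℝ)) := by ring
        _ ≤ c * (1+(K:ℝ)) := mul_le_mul_of_nonneg_right hc₀c h0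
    have hK : c⁻¹ * M ≤ ∑ i ∈ Finset.range K, Real.exp (-(c*(1+(i:ℝ)))^2) := by
      refine le_trans ?_ hcomp
      rw [hsubst]
      refine mul_le_mul_of_nonneg_left ?_ (inv_nonneg.2 hc0.le)
      rw [intervalIntegral.integral_of_le hle]
      have heq2 : (∫ u in Ioc c (c*(1+(K:ℝ))), Real.exp (-u^2))
          = (∫ u in Ioi c, Real.exp (-u^2)) - ∫ u in Ioi (c*(1+(K:ℝ))), Real.exp (-u^2) := by
        linarith [hsplit]
      rw [heq2, hMdef]
      exact sub_le_sub hmono1 hmono2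
    have hts : t^(s/2-1) = t^((s-3)/2) * t^((1:ℝ)/2) := by
      rw [← Real.rpow_add ht0]
      congr 1
      ring
    have hcval : c = (Real.sqrt π * lam) * t^((1:ℝ)/2) := by
      rw [hcdef, Real.sqrt_mul pi_pos.le, Real.sqrt_eq_rpow t]
      ring
    have ht12 : (0:ℝ) < t^((1:ℝ)/2) := Real.rpow_pos_of_pos ht0 _
    have hEq : M * ((Real.sqrt π * lam)⁻¹ * t^((s-3)/2)) = t^(s/2-1) * (c⁻¹ * M) := by
      rw [hts, hcval, mul_inv]
      field_simp
    rw [hEq]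
    have hmul := mul_le_mul_of_nonneg_left hK (Real.rpow_nonneg ht0.le (s/2-1))
    refine le_trans hmul (le_of_eq ?_)
    rw [Finset.mul_sum]
    refine Finset.sum_congr rfl (fun k _ => ?_)
    rw [hexpk k]
  calc M * ((Real.sqrt π * lam)⁻¹ * ∫ t in (1:ℝ)..B, t ^ ((s-3)/2))
      = ∫ t in (1:ℝ)..B, M * ((Real.sqrt π * lam)⁻¹ * t ^ ((s-3)/2)) := by
        rw [intervalIntegral.integral_const_mul, intervalIntegral.integral_const_mul]
    _ ≤ ∫ t in (1:ℝ)..B, ∑ k ∈ Finset.range K,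
          t^(s/2-1) * Real.exp (-(π*t*(((k:ℝ)+1)*lam)^2)) :=
        intervalIntegral.integral_mono_on hB1.le hInt1 hInt2 hpt
    _ = ∑ k ∈ Finset.range K, ∫ t in (1:ℝ)..B,
          t^(s/2-1) * Real.exp (-(π*t*(((k:ℝ)+1)*lam)^2)) :=
        intervalIntegral.integral_finset_sum (fun k _ => hIntk k)
    _ ≤ ∑ k ∈ Finset.range K, G s lam ((k:ℤ)+1) :=
        Finset.sum_le_sum (fun k _ => hGb k)


end Stmt10Aux

/-- Assume `E*(g,s) + 1/s + 1/(n-s) ≥ (1/2) ∑_{0≠b∈ℤ} f(s, |b| λ₁(g))` for real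
`1 < s < n`, where `f(s,a) = ∫_1^∞ t^{s/2} e^{-π t a²} dt/t`. Then whenever
`λ₁(g) ≤ 2^{-1/(s-1)}`, one has
`E*(g,s) + 1/s + 1/(n-s) ≥ (erfc(√π)/(2(s-1))) λ₁(g)^{-s}`,
where `erfc(x) = (2/√π)∫_x^∞ e^{-u²} du`. Here `Estar` denotes the value
`E*(g,s)` and `lam` denotes `λ₁(g) > 0`. -/
theorem stmt10 (n : ℕ) (s : ℝ) (hs1 : 1 < s) (hsn : s < n)
    (Estar lam : ℝ) (hlam0 : 0 < lam)
    (erfc : ℝ → ℝ)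
    (herfc : ∀ x : ℝ, erfc x = (2 / Real.sqrt π) * ∫ u in Ioi x, Real.exp (-u ^ 2))
    (hAFE : (1 / 2) * ∑' b : {b : ℤ // b ≠ 0},
        (∫ t in Ioi (1 : ℝ),
          t ^ (s / 2) * Real.exp (-(π * t * (|(b : ℤ)| * lam : ℝ) ^ 2)) / t)
      ≤ Estar + 1 / s + 1 / (n - s))
    (hsmall : lam ≤ 2 ^ (-1 / (s - 1) : ℝ)) :
    erfc (Real.sqrt π) / (2 * (s - 1)) * lam ^ (-s)
      ≤ Estar + 1 / s + 1 / (n - s) := by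
  have hs10 : (0:ℝ) < s - 1 := by linarith
  have hs0 : (0:ℝ) < s := by linarith
  have hsqπ : 0 < Real.sqrt π := Real.sqrt_pos.2 pi_pos
  have hlam1 : lam < 1 := by
    refine lt_of_le_of_lt hsmall (Real.rpow_lt_one_of_one_lt_of_neg one_lt_two ?_)
    rw [neg_div]
    simpa using div_pos one_pos hs10
  have hpow : lam ^ (s-1 : ℝ) ≤ 1/2 := by
    calc lam ^ (s-1:ℝ) ≤ (2 ^ (-1/(s-1):ℝ)) ^ (s-1:ℝ) :=
          Real.rpow_le_rpow hlam0.le hsmall (by linarith)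
      _ = 1/2 := by
          rw [← Real.rpow_mul (by norm_num : (0:ℝ) ≤ 2),
            show (-1/(s-1))*(s-1) = (-1:ℝ) by field_simp]
          rw [Real.rpow_neg_one]
          norm_num
  -- rewrite the tsum
  have hterm : ∀ b : {b : ℤ // b ≠ 0},
      (∫ t in Ioi (1 : ℝ),
          t ^ (s / 2) * Real.exp (-(π * t * (|(b : ℤ)| * lam : ℝ) ^ 2)) / t)
      = Stmt10Aux.G s lam (b : ℤ) := by
    intro b
    refine setIntegral_congr_fun measurableSet_Ioi (fun t ht => ?_)
    have ht0 : (0:ℝ) < t := lt_trans zero_lt_one (mem_Ioi.1 ht)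
    show t ^ (s / 2) * Real.exp _ / t = t ^ (s/2 - 1) * Real.exp _
    rw [Real.rpow_sub_one (ne_of_gt ht0)]
    ring
  rw [tsum_congr hterm] at hAFE
  -- per-K bound
  have hmain : ∀ K : ℕ,
      (Real.sqrt π / 2 * erfc (Real.sqrt π)
          - ∫ u in Ioi ((1+(K:ℝ)) * (Real.sqrt π * lam)), Real.exp (-u^2))
        * ((Real.sqrt π * lam)⁻¹ * ∫ t in (1:ℝ)..(lam⁻¹^2), t ^ ((s-3)/2))
      ≤ Estar + 1 / s + 1 / (n - s) := by
    intro K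
    have h1 := Stmt10Aux.key_bound erfc herfc hs1 hlam0 hlam1 K
    have h2 := Stmt10Aux.two_sum_le_tsum (s := s) (lam := lam) hs0 hlam0 K
    linarith
  -- limit K → ∞
  have hτ := Stmt10Aux.tau_tendsto (c₀ := Real.sqrt π * lam) (by positivity)
  have hlim := (hτ.const_sub (Real.sqrt π / 2 * erfc (Real.sqrt π))).mul_const
    ((Real.sqrt π * lam)⁻¹ * ∫ t in (1:ℝ)..(lam⁻¹^2), t ^ ((s-3)/2))
  rw [sub_zero] at hlim
  have hfinal : (Real.sqrt π / 2 * erfc (Real.sqrt π))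
      * ((Real.sqrt π * lam)⁻¹ * ∫ t in (1:ℝ)..(lam⁻¹^2), t ^ ((s-3)/2))
      ≤ Estar + 1 / s + 1 / (n - s) :=
    le_of_tendsto hlim (Eventually.of_forall hmain)
  refine le_trans ?_ hfinal
  -- evaluate the rpow integral
  have hJ : (∫ t in (1:ℝ)..(lam⁻¹^2), t ^ ((s-3)/2))
      = (lam ^ (1-s:ℝ) - 1) / ((s-1)/2) := by
    rw [integral_rpow (Or.inl (by linarith : (-1:ℝ) < (s-3)/2))]
    rw [show (s-3)/2 + 1 = (s-1)/2 by ring, Real.one_rpow]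
    congr 1
    rw [← Real.rpow_natCast lam⁻¹ 2, ← Real.rpow_mul (inv_nonneg.2 hlam0.le)]
    rw [Real.inv_rpow hlam0.le, ← Real.rpow_neg hlam0.le]
    congr 1
    norm_num
    ring
  rw [hJ]
  -- final arithmetic
  have he0 : 0 ≤ erfc (Real.sqrt π) := by
    rw [herfc]
    exact mul_nonneg (by positivity)
      (setIntegral_nonneg measurableSet_Ioi (fun u _ => (Real.exp_pos _).le))
  have hX0 : 0 < lam ^ (1-s:ℝ) := Real.rpow_pos_of_pos hlam0 _
  have hP0 : 0 < lam ^ (-s:ℝ) := Real.rpow_pos_of_pos hlam0 _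
  have hXdef : lam ^ (1-s:ℝ) = (lam ^ (s-1:ℝ))⁻¹ := by
    rw [← Real.rpow_neg hlam0.le]
    congr 1
    ring
  have hp0 : 0 < lam ^ (s-1:ℝ) := Real.rpow_pos_of_pos hlam0 _
  have hX2 : 2 ≤ lam ^ (1-s:ℝ) := by
    rw [hXdef]
    rw [show (2:ℝ) = (1/2)⁻¹ by norm_num]
    exact inv_anti₀ hp0 hpow
  have hXP : lam ^ (1-s:ℝ) = lam ^ (-s:ℝ) * lam := by
    have h5 : lam ^ ((-s)+1:ℝ) = lam ^ (-s:ℝ) * lam ^ (1:ℝ) := Real.rpow_add hlam0 _ _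
    rw [Real.rpow_one] at h5
    rw [show (1-s:ℝ) = -s+1 by ring, h5]
  have hRHSeq : (Real.sqrt π / 2 * erfc (Real.sqrt π))
      * ((Real.sqrt π * lam)⁻¹ * ((lam ^ (1-s:ℝ) - 1) / ((s-1)/2)))
      = erfc (Real.sqrt π) * (lam ^ (1-s:ℝ) - 1) / ((s-1)*lam) := by
    field_simp
  rw [hRHSeq]
  rw [div_mul_eq_mul_div, div_le_div_iff₀ (by positivity) (by positivity)]
  have h6 : lam ^ (-s:ℝ) * lam ≤ 2*(lam ^ (1-s:ℝ) - 1) := by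
    rw [← hXP]
    linarith
  have h7 := mul_le_mul_of_nonneg_left h6 (mul_nonneg he0 hs10.le)
  nlinarith [h7]
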